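/- Let (λ_i)_{i≥0} be a strictly increasing sequence of positive reals with d_k = λ_{2k} − λ_{2k−1} satisfying ∑_{k=1}^∞ d_k < ∞, and let (P_k)_{k≥1} satisfy λ_{2k−1} ≤ P_k ≤ λ_{2k} for all k. Then ∑_{k=1}^∞ |1 − √(λ_{2k−1}λ_{2k})/P_k| ≤ (1/λ_1)·∑_{k=1}^∞ d_k < ∞, and consequently the infinite product ∏_{k=1}^∞ √(λ_{2k−1}λ_{2k})/P_k converges to a strictly positive real number. -/

import Mathlib

private lemma abs_log_le_aux (x : ℝ) (hx : 0 < x) :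
    |Real.log x| ≤ |x - 1| + |x⁻¹ - 1| := by
  rcases le_or_gt 1 x with h | h
  · rw [abs_of_nonneg (Real.log_nonneg h)]
    have h1 : Real.log x ≤ x - 1 := Real.log_le_sub_one_of_pos hx
    have h2 : x - 1 ≤ |x - 1| := le_abs_self _
    have h3 : (0:ℝ) ≤ |x⁻¹ - 1| := abs_nonneg _
    linarith
  · rw [abs_of_nonpos (Real.log_nonpos hx.le h.le)]
    have hxi : 0 < x⁻¹ := inv_pos.mpr hx
    have h1 : Real.log x⁻¹ ≤ x⁻¹ - 1 := Real.log_le_sub_one_of_pos hxi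
    rw [Real.log_inv] at h1
    have h2 : x⁻¹ - 1 ≤ |x⁻¹ - 1| := le_abs_self _
    have h3 : (0:ℝ) ≤ |x - 1| := abs_nonneg _
    linarith

/-- With `d_k = λ_{2k} − λ_{2k−1}` summable and `λ_{2k−1} ≤ P_k ≤ λ_{2k}`, one has
`∑_{k=1}^∞ |1 − √(λ_{2k−1}λ_{2k})/P_k| ≤ (1/λ_1)·∑_{k=1}^∞ d_k < ∞`, and consequently the
infinite product `∏_{k=1}^∞ √(λ_{2k−1}λ_{2k})/P_k` converges to a strictly positive real. -/
theorem sum_abs_one_sub_sqrt_div_P_le_and_tprod_pos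
    (lam : ℕ → ℝ) (hmono : StrictMono lam) (hpos : ∀ i, 0 < lam i)
    (hd : Summable (fun k : ℕ => lam (2 * k + 2) - lam (2 * k + 1)))
    (P : ℕ → ℝ) (hP : ∀ k : ℕ, lam (2 * k + 1) ≤ P (k + 1) ∧ P (k + 1) ≤ lam (2 * k + 2)) :
    Summable (fun k : ℕ => |1 - Real.sqrt (lam (2 * k + 1) * lam (2 * k + 2)) / P (k + 1)|) ∧
    (∑' k : ℕ, |1 - Real.sqrt (lam (2 * k + 1) * lam (2 * k + 2)) / P (k + 1)| ≤
      (1 / lam 1) * ∑' k : ℕ, (lam (2 * k + 2) - lam (2 * k + 1))) ∧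
    Multipliable (fun k : ℕ => Real.sqrt (lam (2 * k + 1) * lam (2 * k + 2)) / P (k + 1)) ∧
    0 < ∏' k : ℕ, Real.sqrt (lam (2 * k + 1) * lam (2 * k + 2)) / P (k + 1) := by
  have hl1 : 0 < lam 1 := hpos 1
  have ha : ∀ k : ℕ, lam 1 ≤ lam (2 * k + 1) := fun k => hmono.le_iff_le.mpr (by omega)
  have hab : ∀ k : ℕ, lam (2 * k + 1) < lam (2 * k + 2) := fun k => hmono (by omega)
  have hapos : ∀ k : ℕ, 0 < lam (2 * k + 1) := fun k => hpos _
  have hPpos : ∀ k : ℕ, 0 < P (k + 1) := fun k => lt_of_lt_of_le (lt_of_lt_of_le hl1 (ha k)) (hP k).1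
  set s : ℕ → ℝ := fun k => Real.sqrt (lam (2 * k + 1) * lam (2 * k + 2)) with hs
  have hsq : ∀ k, (s k) ^ 2 = lam (2 * k + 1) * lam (2 * k + 2) := fun k =>
    Real.sq_sqrt (by nlinarith [hapos k, hab k])
  have hsnn : ∀ k, 0 ≤ s k := fun k => Real.sqrt_nonneg _
  have hslb : ∀ k, lam (2 * k + 1) ≤ s k := by
    intro k
    nlinarith [hsq k, hsnn k, hapos k, hab k]
  have hsub : ∀ k, s k ≤ lam (2 * k + 2) := by
    intro k
    nlinarith [hsq k, hsnn k, hapos k, hab k]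
  have hspos : ∀ k, 0 < s k := fun k => lt_of_lt_of_le (hapos k) (hslb k)
  have hfpos : ∀ k, 0 < s k / P (k + 1) := fun k => div_pos (hspos k) (hPpos k)
  -- key bounds
  have key1 : ∀ k, |1 - s k / P (k + 1)| ≤ (1 / lam 1) * (lam (2 * k + 2) - lam (2 * k + 1)) := by
    intro k
    have h1 : 1 - s k / P (k + 1) = (P (k + 1) - s k) / P (k + 1) := by
      rw [sub_div, div_self (hPpos k).ne']
    rw [h1, abs_div, abs_of_pos (hPpos k)]
    have hnum : |P (k + 1) - s k| ≤ lam (2 * k + 2) - lam (2 * k + 1) := by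
      rw [abs_sub_le_iff]
      constructor <;> [skip; skip] <;>
        · have := (hP k).1; have := (hP k).2; have := hslb k; have := hsub k; linarith
    have hP1 : lam 1 ≤ P (k + 1) := le_trans (ha k) (hP k).1
    calc |P (k + 1) - s k| / P (k + 1) ≤ (lam (2 * k + 2) - lam (2 * k + 1)) / lam 1 :=
          div_le_div₀ (by linarith [hab k]) hnum hl1 hP1
      _ = (1 / lam 1) * (lam (2 * k + 2) - lam (2 * k + 1)) := by ring
  have key2 : ∀ k, |1 - P (k + 1) / s k| ≤ (1 / lam 1) * (lam (2 * k + 2) - lam (2 * k + 1)) := by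
    intro k
    have h1 : 1 - P (k + 1) / s k = (s k - P (k + 1)) / s k := by
      rw [sub_div, div_self (hspos k).ne']
    rw [h1, abs_div, abs_of_pos (hspos k)]
    have hnum : |s k - P (k + 1)| ≤ lam (2 * k + 2) - lam (2 * k + 1) := by
      rw [abs_sub_le_iff]
      constructor <;> [skip; skip] <;>
        · have := (hP k).1; have := (hP k).2; have := hslb k; have := hsub k; linarith
    have hs1 : lam 1 ≤ s k := le_trans (ha k) (hslb k)
    calc |s k - P (k + 1)| / s k ≤ (lam (2 * k + 2) - lam (2 * k + 1)) / lam 1 :=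
          div_le_div₀ (by linarith [hab k]) hnum hl1 hs1
      _ = (1 / lam 1) * (lam (2 * k + 2) - lam (2 * k + 1)) := by ring
  have hsummable : Summable (fun k : ℕ => |1 - s k / P (k + 1)|) := by
    apply Summable.of_nonneg_of_le (fun k => abs_nonneg _) key1
    exact hd.mul_left _
  refine ⟨hsummable, ?_, ?_⟩
  · -- tsum bound
    calc ∑' k : ℕ, |1 - s k / P (k + 1)|
        ≤ ∑' k : ℕ, (1 / lam 1) * (lam (2 * k + 2) - lam (2 * k + 1)) :=
          Summable.tsum_le_tsum key1 hsummable (hd.mul_left _)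
      _ = (1 / lam 1) * ∑' k : ℕ, (lam (2 * k + 2) - lam (2 * k + 1)) := tsum_mul_left
  · -- multipliable and positive
    have hlog : Summable (fun k : ℕ => Real.log (s k / P (k + 1))) := by
      apply Summable.of_abs
      refine Summable.of_nonneg_of_le (fun k => abs_nonneg _)
        (f := fun k => (1 / lam 1) * (lam (2 * k + 2) - lam (2 * k + 1))
          + (1 / lam 1) * (lam (2 * k + 2) - lam (2 * k + 1)))
        ?_ ((hd.mul_left _).add (hd.mul_left _))
      · intro k
        have h := abs_log_le_aux (s k / P (k + 1)) (hfpos k)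
        have hinv : (s k / P (k + 1))⁻¹ = P (k + 1) / s k := by
          rw [inv_div]
        rw [hinv] at h
        have h1 : |s k / P (k + 1) - 1| = |1 - s k / P (k + 1)| := abs_sub_comm _ _
        have h2 : |P (k + 1) / s k - 1| = |1 - P (k + 1) / s k| := abs_sub_comm _ _
        rw [h1, h2] at h
        exact le_trans h (add_le_add (key1 k) (key2 k))
    have hmul : Multipliable (fun k : ℕ => s k / P (k + 1)) :=
      Real.multipliable_of_summable_log hfpos hlog
    refine ⟨hmul, ?_⟩
    have := Real.rexp_tsum_eq_tprod (f := fun k => s k / P (k + 1)) hfpos hlog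
    rw [← this]
    exact Real.exp_pos _
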